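/- Let g : [0,∞) → ℝ be a positive, strictly increasing, differentiable function, let k > 0, let q ∈ (0,1), and let λ > 0 and μ > 0 be real numbers. Then the function T(t) = g(t)^λ·e^{λ γ g(t)/k}·Γ_k(g(t))^λ / (k^{λ g(t)/k}·(1−q)^{μ g(t)/k}·Γ_{(q,k)}(g(t))^μ) is strictly increasing on [0,∞); that is, for all 0 ≤ s < t we have T(s) < T(t). -/

import Mathlib

open Real

/-- `[p]_q = (1 - q^p)/(1 - q)` -/
noncomputable def pnq (p : ℕ) (q : ℝ) : ℝ := (1 - q ^ p) / (1 - q)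

/-- q-psi function via its series representation. -/
noncomputable def psiq (q s : ℝ) : ℝ :=
  -Real.log (1 - q) + Real.log q * ∑' n : ℕ, q ^ (((n : ℝ) + 1) * s) / (1 - q ^ (n + 1))

/-- (p,q)-psi function via its series representation. -/
noncomputable def psipq (p : ℕ) (q s : ℝ) : ℝ :=
  Real.log (pnq p q) +
    Real.log q * ∑ n ∈ Finset.range p, q ^ (((n : ℝ) + 1) * s) / (1 - q ^ (n + 1))

/-- k-psi function via its series representation. -/
noncomputable def psik (k s : ℝ) : ℝ :=
  (Real.log k - Real.eulerMascheroniConstant) / k - 1 / s +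
    ∑' n : ℕ, s / (((n : ℝ) + 1) * k * (((n : ℝ) + 1) * k + s))

/-- (q,k)-psi function via its series representation. -/
noncomputable def psiqk (q k s : ℝ) : ℝ :=
  -Real.log (1 - q) / k +
    Real.log q * ∑' n : ℕ, q ^ (((n : ℝ) + 1) * k * s) / (1 - q ^ (((n : ℝ) + 1) * k))

/-- Normalized q-Gamma function. -/
noncomputable def Gammaq (q s : ℝ) : ℝ :=
  (1 - q) ^ (-s) *
    Real.exp (∑' n : ℕ, q ^ (((n : ℝ) + 1) * s) / (((n : ℝ) + 1) * (1 - q ^ (n + 1))))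

/-- Normalized (p,q)-Gamma function. -/
noncomputable def Gammapq (p : ℕ) (q s : ℝ) : ℝ :=
  (pnq p q) ^ s *
    Real.exp (∑ n ∈ Finset.range p, q ^ (((n : ℝ) + 1) * s) / (((n : ℝ) + 1) * (1 - q ^ (n + 1))))

/-- Normalized (q,k)-Gamma function. -/
noncomputable def Gammaqk (q k s : ℝ) : ℝ :=
  (1 - q) ^ (-s / k) *
    Real.exp (∑' n : ℕ,
      q ^ (((n : ℝ) + 1) * k * s) / (((n : ℝ) + 1) * k * (1 - q ^ (((n : ℝ) + 1) * k))))

/-- k-Gamma function. -/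
noncomputable def Gammak (k s : ℝ) : ℝ :=
  ∫ x in Set.Ioi (0 : ℝ), Real.exp (-(x ^ k) / k) * x ^ (s - 1)

section auxlemmas

open Real

private lemma strictConvexOn_aux :
    StrictConvexOn ℝ (Set.Ioi (0:ℝ))
      (fun y => Real.eulerMascheroniConstant * y + Real.log (Real.Gamma y)) := by
  have A1 : StrictConvexOn ℝ (Set.Ioi (0:ℝ)) (fun y : ℝ => -Real.log y) :=
    strictConcaveOn_log_Ioi.neg
  have A2 : ConvexOn ℝ (Set.Ioi (0:ℝ))
      (fun y : ℝ => Real.eulerMascheroniConstant * y + Real.log (Real.Gamma (y + 1))) := by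
    refine ⟨convex_Ioi 0, fun x hx y hy a b ha hb hab => ?_⟩
    have hx1 : (x + 1 : ℝ) ∈ Set.Ioi (0:ℝ) := by
      simp only [Set.mem_Ioi] at hx ⊢; linarith
    have hy1 : (y + 1 : ℝ) ∈ Set.Ioi (0:ℝ) := by
      simp only [Set.mem_Ioi] at hy ⊢; linarith
    have h := Real.convexOn_log_Gamma.2 hx1 hy1 ha hb hab
    simp only [smul_eq_mul, Function.comp_apply] at h ⊢
    have e : a * x + b * y + 1 = a * (x + 1) + b * (y + 1) := by linarith
    rw [e]
    nlinarith [h]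
  have A : StrictConvexOn ℝ (Set.Ioi (0:ℝ))
      (fun y : ℝ => -Real.log y +
        (Real.eulerMascheroniConstant * y + Real.log (Real.Gamma (y + 1)))) :=
    A1.add_convexOn A2
  have key : ∀ z ∈ Set.Ioi (0:ℝ),
      -Real.log z + (Real.eulerMascheroniConstant * z + Real.log (Real.Gamma (z + 1)))
        = Real.eulerMascheroniConstant * z + Real.log (Real.Gamma z) := by
    intro z hz
    rw [Real.Gamma_add_one (ne_of_gt hz),
      Real.log_mul (ne_of_gt hz) (ne_of_gt (Real.Gamma_pos_of_pos hz))]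
    ring
  refine ⟨A.1, fun x hx y hy hxy a b ha hb hab => ?_⟩
  have hmem : a • x + b • y ∈ Set.Ioi (0:ℝ) := A.1 hx hy ha.le hb.le hab
  have h := A.2 hx hy hxy ha hb hab
  simp only [smul_eq_mul] at h hmem ⊢
  rw [key _ hmem, key _ hx, key _ hy] at h
  exact h

private lemma convex_incr {f : ℝ → ℝ} (hSC : StrictConvexOn ℝ (Set.Ioi (0:ℝ)) f)
    (hderiv : HasDerivAt f 0 1) {u v : ℝ} (hu : 1 < u) (huv : u < v) : f u < f v := by
  have hbase : ∀ w : ℝ, 1 < w → f 1 < f w := by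
    intro w hw
    have hs := hSC.lt_slope_of_hasDerivAt (Set.mem_Ioi.2 one_pos)
      (Set.mem_Ioi.2 (lt_trans one_pos hw)) hw hderiv
    rw [slope_def_field] at hs
    have hw1 : (0:ℝ) < w - 1 := by linarith
    have h5 := mul_pos hs hw1
    rw [div_mul_cancel₀ _ (ne_of_gt hw1)] at h5
    linarith
  have hv1 : (0:ℝ) < v - 1 := by linarith
  have h1v : f 1 < f v := hbase _ (by linarith)
  have hα : (0:ℝ) < (v - u) / (v - 1) := div_pos (by linarith) hv1
  have hβ : (0:ℝ) < (u - 1) / (v - 1) := div_pos (by linarith) hv1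
  have hsum : (v - u) / (v - 1) + (u - 1) / (v - 1) = 1 := by field_simp; ring
  have hcombo := hSC.2 (Set.mem_Ioi.2 one_pos)
    (Set.mem_Ioi.2 (by linarith : (0:ℝ) < v))
    (by intro h; exact absurd h (by linarith) : (1:ℝ) ≠ v) hα hβ hsum
  have hpt : ((v - u) / (v - 1)) • (1:ℝ) + ((u - 1) / (v - 1)) • v = u := by
    simp only [smul_eq_mul]; field_simp; ring
  rw [hpt] at hcombo
  simp only [smul_eq_mul] at hcombo
  have key2 : 0 < (v - u) / (v - 1) * (f v - f 1) := mul_pos hα (sub_pos.2 h1v)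
  have e3 : (v - u) / (v - 1) * f 1 + (u - 1) / (v - 1) * f v
      = f v - (v - u) / (v - 1) * (f v - f 1) := by
    field_simp; ring
  rw [e3] at hcombo
  linarith

private lemma gamma_factor_lt {a b : ℝ} (ha : 0 < a) (hab : a < b) :
    Real.exp (Real.eulerMascheroniConstant * a) * Real.Gamma (a + 1) <
      Real.exp (Real.eulerMascheroniConstant * b) * Real.Gamma (b + 1) := by
  have hderiv : HasDerivAt
      (fun y => Real.eulerMascheroniConstant * y + Real.log (Real.Gamma y)) 0 1 := by
    have h1 : HasDerivAt Real.Gamma (-Real.eulerMascheroniConstant) 1 :=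
      Real.hasDerivAt_Gamma_one
    have h2 : HasDerivAt (fun y => Real.log (Real.Gamma y))
        (-Real.eulerMascheroniConstant / Real.Gamma 1) 1 :=
      h1.log (by rw [Real.Gamma_one]; norm_num)
    have h3 : HasDerivAt (fun y : ℝ => Real.eulerMascheroniConstant * y)
        Real.eulerMascheroniConstant 1 := by
      simpa using (hasDerivAt_id (1:ℝ)).const_mul Real.eulerMascheroniConstant
    have h4 := h3.add h2
    have e : Real.eulerMascheroniConstant + -Real.eulerMascheroniConstant / Real.Gamma 1 = 0 := by
      rw [Real.Gamma_one]; ring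
    rw [e] at h4
    exact h4
  have hHuv := convex_incr strictConvexOn_aux hderiv
    (show (1:ℝ) < a + 1 by linarith) (show a + 1 < b + 1 by linarith)
  have hgoal : Real.eulerMascheroniConstant * a + Real.log (Real.Gamma (a + 1)) <
      Real.eulerMascheroniConstant * b + Real.log (Real.Gamma (b + 1)) := by
    nlinarith [hHuv]
  have hΓa : 0 < Real.Gamma (a + 1) := Real.Gamma_pos_of_pos (by linarith)
  have hΓb : 0 < Real.Gamma (b + 1) := Real.Gamma_pos_of_pos (by linarith)
  calc Real.exp (Real.eulerMascheroniConstant * a) * Real.Gamma (a + 1)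
      = Real.exp (Real.eulerMascheroniConstant * a + Real.log (Real.Gamma (a + 1))) := by
        rw [Real.exp_add, Real.exp_log hΓa]
    _ < Real.exp (Real.eulerMascheroniConstant * b + Real.log (Real.Gamma (b + 1))) :=
        Real.exp_lt_exp.2 hgoal
    _ = Real.exp (Real.eulerMascheroniConstant * b) * Real.Gamma (b + 1) := by
        rw [Real.exp_add, Real.exp_log hΓb]

private lemma Gammak_eq {k x : ℝ} (hk : 0 < k) (hx : 0 < x) :
    Gammak k x = k ^ (x / k) * (1 / k) * Real.Gamma (x / k) := by
  rw [Gammak]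
  rw [show (∫ t in Set.Ioi (0:ℝ), Real.exp (-(t ^ k) / k) * t ^ (x - 1))
      = ∫ t in Set.Ioi (0:ℝ), t ^ (x - 1) * Real.exp (-(1 / k) * t ^ k) from ?_]
  · rw [integral_rpow_mul_exp_neg_mul_rpow hk (by linarith) (by positivity)]
    rw [show x - 1 + 1 = x by ring]
    congr 2
    rw [one_div, Real.inv_rpow hk.le, ← Real.rpow_neg hk.le, neg_div, neg_neg]
  · refine MeasureTheory.setIntegral_congr_fun measurableSet_Ioi (fun t ht => ?_)
    rw [mul_comm]
    congr 1
    ring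

private lemma S_summable {q k x : ℝ} (hq0 : 0 < q) (hq1 : q < 1) (hk : 0 < k) (hx : 0 < x) :
    Summable (fun n : ℕ =>
      q ^ (((n : ℝ) + 1) * k * x) / (((n : ℝ) + 1) * k * (1 - q ^ (((n : ℝ) + 1) * k)))) := by
  have hr0 : 0 ≤ q ^ (k * x) := Real.rpow_nonneg hq0.le _
  have hr1 : q ^ (k * x) < 1 := Real.rpow_lt_one hq0.le hq1 (by positivity)
  have hqk1 : q ^ k < 1 := Real.rpow_lt_one hq0.le hq1 hk
  have hsum : Summable (fun n : ℕ => q ^ (k * x) * (q ^ (k * x)) ^ n / (k * (1 - q ^ k))) :=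
    ((summable_geometric_of_lt_one hr0 hr1).mul_left _).div_const _
  refine Summable.of_nonneg_of_le (fun n => ?_) (fun n => ?_) hsum
  · have hcn : (0:ℝ) < ((n : ℝ) + 1) * k := by positivity
    have hqc : q ^ (((n : ℝ) + 1) * k) < 1 := Real.rpow_lt_one hq0.le hq1 hcn
    have : (0:ℝ) ≤ ((n : ℝ) + 1) * k * (1 - q ^ (((n : ℝ) + 1) * k)) := by
      apply mul_nonneg hcn.le; linarith
    exact div_nonneg (Real.rpow_nonneg hq0.le _) this
  · have hnum : q ^ (((n : ℝ) + 1) * k * x) = q ^ (k * x) * (q ^ (k * x)) ^ n := by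
      rw [show ((n : ℝ) + 1) * k * x = (k * x) * ((n : ℝ) + 1) by ring,
        Real.rpow_mul hq0.le, show ((n : ℝ) + 1) = ((n + 1 : ℕ) : ℝ) by push_cast; ring,
        Real.rpow_natCast, pow_succ, mul_comm]
    rw [hnum]
    have hqc : q ^ (((n : ℝ) + 1) * k) ≤ q ^ k :=
      Real.rpow_le_rpow_of_exponent_ge hq0 hq1.le (by nlinarith [Nat.cast_nonneg (α := ℝ) n])
    have hden : k * (1 - q ^ k) ≤ ((n : ℝ) + 1) * k * (1 - q ^ (((n : ℝ) + 1) * k)) := by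
      have h1 : k ≤ ((n : ℝ) + 1) * k := by nlinarith [Nat.cast_nonneg (α := ℝ) n]
      have h2 : 1 - q ^ k ≤ 1 - q ^ (((n : ℝ) + 1) * k) := by linarith
      have h3 : (0:ℝ) ≤ 1 - q ^ k := by linarith
      exact mul_le_mul h1 h2 h3 (by positivity)
    have hdenpos : (0:ℝ) < k * (1 - q ^ k) := by
      apply mul_pos hk; linarith
    exact div_le_div_of_nonneg_left (by positivity) hdenpos hden

private lemma S_lt {q k : ℝ} (hq0 : 0 < q) (hq1 : q < 1) (hk : 0 < k) {a b : ℝ}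
    (ha : 0 < a) (hab : a < b) :
    (∑' n : ℕ, q ^ (((n : ℝ) + 1) * k * b) / (((n : ℝ) + 1) * k * (1 - q ^ (((n : ℝ) + 1) * k))))
      < ∑' n : ℕ, q ^ (((n : ℝ) + 1) * k * a)
          / (((n : ℝ) + 1) * k * (1 - q ^ (((n : ℝ) + 1) * k))) := by
  have hden : ∀ n : ℕ, (0:ℝ) < ((n : ℝ) + 1) * k * (1 - q ^ (((n : ℝ) + 1) * k)) := by
    intro n
    have hcn : (0:ℝ) < ((n : ℝ) + 1) * k := by positivity
    have hqc : q ^ (((n : ℝ) + 1) * k) < 1 := Real.rpow_lt_one hq0.le hq1 hcn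
    apply mul_pos hcn; linarith
  refine Summable.tsum_lt_tsum_of_nonneg (i := 0) (fun n => ?_) (fun n => ?_) ?_
    (S_summable hq0 hq1 hk ha)
  · exact div_nonneg (Real.rpow_nonneg hq0.le _) (hden n).le
  · refine (div_le_div_iff_of_pos_right (hden n)).2 ?_
    refine Real.rpow_le_rpow_of_exponent_ge hq0 hq1.le ?_
    nlinarith [mul_lt_mul_of_pos_left hab hk, Nat.cast_nonneg (α := ℝ) n]
  · refine (div_lt_div_iff_of_pos_right (hden 0)).2 ?_
    refine Real.rpow_lt_rpow_of_exponent_gt hq0 hq1 ?_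
    push_cast
    nlinarith [mul_lt_mul_of_pos_left hab hk]

end auxlemmas
private lemma Tval {q k lam mu x : ℝ} (hk : 0 < k) (hq0 : 0 < q) (hq1 : q < 1) (hx : 0 < x) :
    x ^ lam * Real.exp (lam * Real.eulerMascheroniConstant * x / k) * (Gammak k x) ^ lam /
      (k ^ (lam * x / k) * (1 - q) ^ (mu * x / k) * (Gammaqk q k x) ^ mu) =
    (Real.exp (Real.eulerMascheroniConstant * (x / k)) * Real.Gamma (x / k + 1)) ^ lam /
      Real.exp (mu * ∑' n : ℕ, q ^ (((n : ℝ) + 1) * k * x)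
        / (((n : ℝ) + 1) * k * (1 - q ^ (((n : ℝ) + 1) * k)))) := by
  have hy : 0 < x / k := div_pos hx hk
  have hq' : (0:ℝ) < 1 - q := by linarith
  have hΓ : 0 < Real.Gamma (x / k) := Real.Gamma_pos_of_pos hy
  have hΓ1 : 0 < Real.Gamma (x / k + 1) := Real.Gamma_pos_of_pos (by linarith)
  set S := ∑' n : ℕ, q ^ (((n : ℝ) + 1) * k * x)
      / (((n : ℝ) + 1) * k * (1 - q ^ (((n : ℝ) + 1) * k))) with hS
  rw [Gammak_eq hk hx, Gammaqk, ← hS]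
  have hN : x ^ lam * Real.exp (lam * Real.eulerMascheroniConstant * x / k) *
      (k ^ (x / k) * (1 / k) * Real.Gamma (x / k)) ^ lam
      = (Real.exp (Real.eulerMascheroniConstant * (x / k)) * Real.Gamma (x / k + 1)) ^ lam *
        (k ^ (x / k)) ^ lam := by
    rw [Real.mul_rpow (by positivity) hΓ.le, Real.mul_rpow (by positivity) (by positivity)]
    have e1 : Real.exp (lam * Real.eulerMascheroniConstant * x / k)
        = Real.exp (Real.eulerMascheroniConstant * (x / k)) ^ lam := by
      rw [← Real.exp_mul]
      congr 1
      ring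
    have e2 : x * Real.Gamma (x / k) = k * Real.Gamma (x / k + 1) := by
      rw [Real.Gamma_add_one (ne_of_gt hy)]
      field_simp
    have e3 : x ^ lam * Real.Gamma (x / k) ^ lam = k ^ lam * Real.Gamma (x / k + 1) ^ lam := by
      rw [← Real.mul_rpow hx.le hΓ.le, e2, Real.mul_rpow hk.le hΓ1.le]
    have e4 : k ^ lam * (1 / k) ^ lam = 1 := by
      rw [← Real.mul_rpow hk.le (by positivity), mul_one_div_cancel (ne_of_gt hk),
        Real.one_rpow]
    calc x ^ lam * Real.exp (lam * Real.eulerMascheroniConstant * x / k) *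
          ((k ^ (x / k)) ^ lam * (1 / k) ^ lam * Real.Gamma (x / k) ^ lam)
        = (x ^ lam * Real.Gamma (x / k) ^ lam) *
            Real.exp (lam * Real.eulerMascheroniConstant * x / k) *
            ((k ^ (x / k)) ^ lam * (1 / k) ^ lam) := by ring
      _ = (k ^ lam * Real.Gamma (x / k + 1) ^ lam) *
            (Real.exp (Real.eulerMascheroniConstant * (x / k)) ^ lam) *
            ((k ^ (x / k)) ^ lam * (1 / k) ^ lam) := by rw [e3, e1]
      _ = (Real.exp (Real.eulerMascheroniConstant * (x / k)) ^ lam *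
            Real.Gamma (x / k + 1) ^ lam) * (k ^ (x / k)) ^ lam *
            (k ^ lam * (1 / k) ^ lam) := by ring
      _ = (Real.exp (Real.eulerMascheroniConstant * (x / k)) * Real.Gamma (x / k + 1)) ^ lam *
            (k ^ (x / k)) ^ lam := by
          rw [e4, mul_one, Real.mul_rpow (Real.exp_pos _).le hΓ1.le]
  have hD : k ^ (lam * x / k) * (1 - q) ^ (mu * x / k) *
      ((1 - q) ^ (-x / k) * Real.exp S) ^ mu
      = (k ^ (x / k)) ^ lam * Real.exp (mu * S) := by
    have d1 : k ^ (lam * x / k) = (k ^ (x / k)) ^ lam := by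
      rw [← Real.rpow_mul hk.le]
      congr 1
      ring
    have d2 : ((1 - q) ^ (-x / k) * Real.exp S) ^ mu
        = (1 - q) ^ (-x / k * mu) * Real.exp (mu * S) := by
      rw [Real.mul_rpow (by positivity) (Real.exp_pos _).le, ← Real.rpow_mul hq'.le,
        ← Real.exp_mul, mul_comm S mu]
    have d3 : (1 - q) ^ (mu * x / k) * (1 - q) ^ (-x / k * mu) = 1 := by
      rw [← Real.rpow_add hq', show mu * x / k + -x / k * mu = 0 by ring, Real.rpow_zero]
    calc k ^ (lam * x / k) * (1 - q) ^ (mu * x / k) *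
          ((1 - q) ^ (-x / k) * Real.exp S) ^ mu
        = (k ^ (x / k)) ^ lam * ((1 - q) ^ (mu * x / k) *
            ((1 - q) ^ (-x / k * mu) * Real.exp (mu * S))) := by rw [d1, d2]; ring
      _ = (k ^ (x / k)) ^ lam * (((1 - q) ^ (mu * x / k) * (1 - q) ^ (-x / k * mu)) *
            Real.exp (mu * S)) := by ring
      _ = (k ^ (x / k)) ^ lam * Real.exp (mu * S) := by rw [d3, one_mul]
  rw [hN, hD]
  rw [mul_comm ((k ^ (x / k)) ^ lam) (Real.exp (mu * S)),
    mul_div_mul_right _ _ (ne_of_gt (Real.rpow_pos_of_pos (Real.rpow_pos_of_pos hk _) lam))]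

theorem stmt11 (g : ℝ → ℝ) (hgpos : ∀ t ∈ Set.Ici (0 : ℝ), 0 < g t)
    (hgmono : StrictMonoOn g (Set.Ici (0 : ℝ)))
    (hgdiff : DifferentiableOn ℝ g (Set.Ici (0 : ℝ)))
    (k : ℝ) (hk : 0 < k) (q : ℝ) (hq : q ∈ Set.Ioo (0 : ℝ) 1)
    (lam mu : ℝ) (hlam : 0 < lam) (hmu : 0 < mu) :
    ∀ s t : ℝ, 0 ≤ s → s < t →
      (g s) ^ lam * Real.exp (lam * Real.eulerMascheroniConstant * g s / k) *
          (Gammak k (g s)) ^ lam /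
          (k ^ (lam * g s / k) * (1 - q) ^ (mu * g s / k) * (Gammaqk q k (g s)) ^ mu) <
        (g t) ^ lam * Real.exp (lam * Real.eulerMascheroniConstant * g t / k) *
          (Gammak k (g t)) ^ lam /
          (k ^ (lam * g t / k) * (1 - q) ^ (mu * g t / k) * (Gammaqk q k (g t)) ^ mu) := by
  obtain ⟨hq0, hq1⟩ := hq
  intro s t hs hst
  have hts : (0:ℝ) ≤ t := le_trans hs hst.le
  have hgs : 0 < g s := hgpos s hs
  have hgt : g s < g t := hgmono hs hts hst
  have hgt0 : 0 < g t := lt_trans hgs hgt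
  rw [Tval hk hq0 hq1 hgs, Tval hk hq0 hq1 hgt0]
  have hΓ1s : 0 < Real.Gamma (g s / k + 1) :=
    Real.Gamma_pos_of_pos (by positivity)
  have hΓ1t : 0 < Real.Gamma (g t / k + 1) :=
    Real.Gamma_pos_of_pos (by positivity)
  have hX1 : 0 < (Real.exp (Real.eulerMascheroniConstant * (g s / k)) *
      Real.Gamma (g s / k + 1)) ^ lam :=
    Real.rpow_pos_of_pos (mul_pos (Real.exp_pos _) hΓ1s) _
  have hnum : (Real.exp (Real.eulerMascheroniConstant * (g s / k)) *
      Real.Gamma (g s / k + 1)) ^ lam <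
      (Real.exp (Real.eulerMascheroniConstant * (g t / k)) *
      Real.Gamma (g t / k + 1)) ^ lam := by
    refine Real.rpow_lt_rpow (mul_pos (Real.exp_pos _) hΓ1s).le ?_ hlam
    exact gamma_factor_lt (div_pos hgs hk) ((div_lt_div_iff_of_pos_right hk).2 hgt)
  have hSlt := S_lt hq0 hq1 hk hgs hgt
  have hdenlt : Real.exp (mu * ∑' n : ℕ, q ^ (((n : ℝ) + 1) * k * g t)
        / (((n : ℝ) + 1) * k * (1 - q ^ (((n : ℝ) + 1) * k)))) <
      Real.exp (mu * ∑' n : ℕ, q ^ (((n : ℝ) + 1) * k * g s)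
        / (((n : ℝ) + 1) * k * (1 - q ^ (((n : ℝ) + 1) * k)))) :=
    Real.exp_lt_exp.2 (mul_lt_mul_of_pos_left hSlt hmu)
  calc (Real.exp (Real.eulerMascheroniConstant * (g s / k)) *
        Real.Gamma (g s / k + 1)) ^ lam /
        Real.exp (mu * ∑' n : ℕ, q ^ (((n : ℝ) + 1) * k * g s)
          / (((n : ℝ) + 1) * k * (1 - q ^ (((n : ℝ) + 1) * k))))
      < (Real.exp (Real.eulerMascheroniConstant * (g s / k)) *
        Real.Gamma (g s / k + 1)) ^ lam /
        Real.exp (mu * ∑' n : ℕ, q ^ (((n : ℝ) + 1) * k * g t)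
          / (((n : ℝ) + 1) * k * (1 - q ^ (((n : ℝ) + 1) * k)))) :=
      div_lt_div_of_pos_left hX1 (Real.exp_pos _) hdenlt
    _ < (Real.exp (Real.eulerMascheroniConstant * (g t / k)) *
        Real.Gamma (g t / k + 1)) ^ lam /
        Real.exp (mu * ∑' n : ℕ, q ^ (((n : ℝ) + 1) * k * g t)
          / (((n : ℝ) + 1) * k * (1 - q ^ (((n : ℝ) + 1) * k)))) :=
      (div_lt_div_iff_of_pos_right (Real.exp_pos _)).2 hnum
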